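/- If X is a reflexive Banach space and Θ_j is weakly closed for every j ∈ J, then both G and H are weakly sequentially lower semicontinuous: for every sequence (x_k) in X converging to x̄ in the weak topology, G(x̄) ≤ liminf_{k→∞} G(x_k) and H(x̄) ≤ liminf_{k→∞} H(x_k). -/

import Mathlib

open Set Pointwise Filter Topology Bornology Function

variable {X : Type*} [NormedAddCommGroup X] [NormedSpace ℝ X]

/-- The Minkowski gauge of `F`: `ρ_F(x) = inf {t ≥ 0 : x ∈ t • F}`. -/
noncomputable def rhoF (F : Set X) (x : X) : ℝ :=
  sInf {t : ℝ | 0 ≤ t ∧ x ∈ t • F}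

/-- The maximal time function `C_F(x; Q) = sup {ρ_F(q - x) : q ∈ Q}`. -/
noncomputable def maxTime (F Q : Set X) (x : X) : ℝ :=
  sSup ((fun q => rhoF F (q - x)) '' Q)

/-- The minimal time function `T_F(x; Θ) = inf {ρ_F(q - x) : q ∈ Θ}`. -/
noncomputable def minTime (F Θ : Set X) (x : X) : ℝ :=
  sInf ((fun q => rhoF F (q - x)) '' Θ)

/-- `G(x) = max {C_F(x; Ω_i), T_F(x; Θ_j) : i ∈ I, j ∈ J}`. -/
noncomputable def GFun {ι κ : Type*} (F : Set X) (I : Finset ι) (J : Finset κ)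
    (Ω : ι → Set X) (Θ : κ → Set X) (x : X) : ℝ :=
  sSup ((fun i => maxTime F (Ω i) x) '' ↑I ∪ (fun j => minTime F (Θ j) x) '' ↑J)

/-- `H(x) = Σ_{i∈I} C_F(x; Ω_i) + Σ_{j∈J} T_F(x; Θ_j)`. -/
noncomputable def HFun {ι κ : Type*} (F : Set X) (I : Finset ι) (J : Finset κ)
    (Ω : ι → Set X) (Θ : κ → Set X) (x : X) : ℝ :=
  ∑ i ∈ I, maxTime F (Ω i) x + ∑ j ∈ J, minTime F (Θ j) x

/-- A set is weakly closed if it is closed in the weak topology on `Y`. -/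
def WeaklyClosed (Y : Type*) [NormedAddCommGroup Y] [NormedSpace ℝ Y] (A : Set Y) : Prop :=
  IsClosed (toWeakSpace ℝ Y '' A)

/-- A normed space is reflexive if the canonical embedding into its double dual is surjective. -/
def IsReflexiveSpace (Y : Type*) [NormedAddCommGroup Y] [NormedSpace ℝ Y] : Prop :=
  Function.Surjective (NormedSpace.inclusionInDoubleDual ℝ Y)

lemma rhoF_eq_gauge {F : Set X} (hne : F.Nonempty) (x : X) : rhoF F x = gauge F x := by
  by_cases hx : x = 0
  · subst hx
    rw [gauge_zero]
    refine le_antisymm (csInf_le ⟨0, fun t ht => ht.1⟩ ⟨le_refl 0, ?_⟩) (Real.sInf_nonneg fun t ht => ht.1)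
    rw [zero_smul_set hne]
    exact Set.zero_mem_zero
  · unfold rhoF gauge
    congr 1
    ext t
    simp only [Set.mem_setOf_eq]
    constructor
    · rintro ⟨ht, hmem⟩
      rcases ht.eq_or_lt with h | h
      · exfalso
        rw [← h] at hmem
        exact hx (Set.mem_singleton_iff.mp (zero_smul_set_subset _ hmem))
      · exact ⟨h, hmem⟩
    · rintro ⟨ht, hmem⟩
      exact ⟨ht.le, hmem⟩

lemma rhoF_nonneg (F : Set X) (x : X) : 0 ≤ rhoF F x :=
  Real.sInf_nonneg fun t ht => ht.1

lemma smul_set_subset_smul_set {F : Set X} (hFconv : Convex ℝ F) (h0F : (0 : X) ∈ F)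
    {s t : ℝ} (hs : 0 ≤ s) (hst : s ≤ t) : s • F ⊆ t • F := by
  rcases eq_or_lt_of_le (hs.trans hst) with h | ht
  · have hs0 : s = 0 := le_antisymm (hst.trans h.symm.le) hs
    rw [hs0, ← h]
  · rintro y ⟨f, hf, rfl⟩
    refine ⟨(s / t) • f, hFconv.smul_mem_of_zero_mem h0F hf
      ⟨div_nonneg hs ht.le, (div_le_one ht).2 hst⟩, ?_⟩
    show t • ((s / t) • f) = s • f
    rw [smul_smul, mul_comm, div_mul_cancel₀ _ ht.ne']

lemma mem_smul_of_gauge_lt {F : Set X} (habs : Absorbent ℝ F) (hFconv : Convex ℝ F)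
    (h0F : (0 : X) ∈ F) {x : X} {c : ℝ} (h : gauge F x < c) : x ∈ c • F := by
  obtain ⟨b, hb0, hbc, hxb⟩ := exists_lt_of_gauge_lt habs h
  exact smul_set_subset_smul_set hFconv h0F hb0.le hbc.le hxb

lemma isClosed_weak_image {s : Set X} (hconv : Convex ℝ s) (hcl : IsClosed s) :
    IsClosed (toWeakSpace ℝ X '' s) := by
  have h := hconv.toWeakSpace_closure (𝕜 := ℝ)
  rw [hcl.closure_eq] at h
  rw [h]
  exact isClosed_closure

lemma image_smul_toWeakSpace (c : ℝ) (s : Set X) :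
    toWeakSpace ℝ X '' (c • s) = c • (toWeakSpace ℝ X '' s) := by
  ext w
  constructor
  · rintro ⟨y, ⟨z, hz, rfl⟩, rfl⟩
    exact ⟨toWeakSpace ℝ X z, ⟨z, hz, rfl⟩, (map_smul _ _ _).symm⟩
  · rintro ⟨y, ⟨z, hz, rfl⟩, rfl⟩
    exact ⟨c • z, ⟨z, hz, rfl⟩, map_smul _ _ _⟩

lemma inclusion_norm (z : X) : ‖NormedSpace.inclusionInDoubleDual ℝ X z‖ = ‖z‖ :=
  (NormedSpace.inclusionInDoubleDualLi ℝ (E := X)).norm_map z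

lemma isCompact_weak_closedBall (hrefl : IsReflexiveSpace X) (R : ℝ) :
    IsCompact (toWeakSpace ℝ X '' Metric.closedBall 0 R) := by
  classical
  set J := NormedSpace.inclusionInDoubleDual ℝ X with hJ
  have hnorm : ∀ z : X, ‖J z‖ = ‖z‖ := inclusion_norm
  have hinj : Function.Injective J := by
    intro a b hab
    have h1 : ‖J (a - b)‖ = ‖a - b‖ := hnorm _
    rw [map_sub, hab, sub_self] at h1
    exact sub_eq_zero.mp (norm_eq_zero.mp (h1.symm.trans (norm_zero (E := StrongDual ℝ (StrongDual ℝ X)))))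
  let e : X ≃ (StrongDual ℝ (StrongDual ℝ X)) := Equiv.ofBijective J ⟨hinj, hrefl⟩
  have he : ∀ z : X, e z = J z := fun z => rfl
  let Φ : WeakDual ℝ (StrongDual ℝ X) → WeakSpace ℝ X :=
    fun ψ => toWeakSpace ℝ X (e.symm (WeakDual.toStrongDual ψ))
  have hΦc : Continuous Φ := by
    refine WeakBilin.continuous_of_continuous_eval _ fun φ => ?_
    have hkey : (fun ψ : WeakDual ℝ (StrongDual ℝ X) =>
        (topDualPairing ℝ X).flip (Φ ψ) φ) = fun ψ => ψ φ := by
      funext ψ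
      have h1 : (topDualPairing ℝ X).flip (Φ ψ) φ = φ (e.symm (WeakDual.toStrongDual ψ)) := rfl
      have h2 : φ (e.symm (WeakDual.toStrongDual ψ))
          = (e (e.symm (WeakDual.toStrongDual ψ))) φ := rfl
      rw [h1, h2, Equiv.apply_symm_apply]
      rfl
    rw [hkey]
    exact WeakDual.eval_continuous φ
  have himg : toWeakSpace ℝ X '' Metric.closedBall 0 R
      = Φ '' (WeakDual.toStrongDual ⁻¹' Metric.closedBall 0 R) := by
    ext w
    constructor
    · rintro ⟨z, hz, rfl⟩
      refine ⟨WeakDual.toStrongDual.symm (J z), ?_, ?_⟩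
      · simp only [Set.mem_preimage, LinearEquiv.apply_symm_apply, mem_closedBall_zero_iff]
        exact (mem_closedBall_zero_iff (E := StrongDual ℝ (StrongDual ℝ X))).mpr ((hnorm z).trans_le (mem_closedBall_zero_iff.mp hz))
      · show toWeakSpace ℝ X (e.symm (WeakDual.toStrongDual (WeakDual.toStrongDual.symm (J z))))
          = toWeakSpace ℝ X z
        rw [LinearEquiv.apply_symm_apply]
        have : e.symm (J z) = z := by
          rw [← he z, Equiv.symm_apply_apply]
        rw [this]
    · rintro ⟨ψ, hψ, rfl⟩
      refine ⟨e.symm (WeakDual.toStrongDual ψ), ?_, rfl⟩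
      replace hψ : ‖WeakDual.toStrongDual ψ‖ ≤ R := (mem_closedBall_zero_iff (E := StrongDual ℝ (StrongDual ℝ X))).mp hψ
      rw [mem_closedBall_zero_iff, ← hnorm]
      have : J (e.symm (WeakDual.toStrongDual ψ)) = e (e.symm (WeakDual.toStrongDual ψ)) := rfl
      rw [this, Equiv.apply_symm_apply]
      exact hψ
  rw [himg]
  exact (WeakDual.isCompact_closedBall (𝕜 := ℝ) (E := StrongDual ℝ X) 0 R).image hΦc

lemma isCompact_weak_smul (hrefl : IsReflexiveSpace X) {F : Set X} (hFc : IsClosed F)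
    (hFb : IsBounded F) (hFconv : Convex ℝ F) (c : ℝ) :
    IsCompact (toWeakSpace ℝ X '' (c • F)) := by
  obtain ⟨R, hR⟩ := hFb.subset_closedBall 0
  have hFw : IsCompact (toWeakSpace ℝ X '' F) :=
    (isCompact_weak_closedBall hrefl R).of_isClosed_subset
      (isClosed_weak_image hFconv hFc) (Set.image_mono hR)
  rw [image_smul_toWeakSpace]
  haveI : ContinuousSMul ℝ (WeakSpace ℝ X) :=
    inferInstanceAs (ContinuousSMul ℝ (WeakBilin (topDualPairing ℝ X).flip))
  exact hFw.smul c

lemma mem_smul_of_weak_tendsto {F : Set X} (hFc : IsClosed F) (hFconv : Convex ℝ F)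
    {L : Filter ℕ} [L.NeBot] {z : ℕ → X} {zbar : X} {c : ℝ} (hc : 0 < c)
    (hz : Tendsto (fun k => toWeakSpace ℝ X (z k)) L (𝓝 (toWeakSpace ℝ X zbar)))
    (hmem : ∀ᶠ k in L, z k ∈ c • F) : zbar ∈ c • F := by
  have hcl : IsClosed (toWeakSpace ℝ X '' (c • F)) :=
    isClosed_weak_image (hFconv.smul c) (hFc.smul_of_ne_zero hc.ne')
  have hm : ∀ᶠ k in L, toWeakSpace ℝ X (z k) ∈ toWeakSpace ℝ X '' (c • F) :=
    hmem.mono fun k hk => Set.mem_image_of_mem _ hk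
  obtain ⟨w, hw, hweq⟩ := hcl.mem_of_tendsto hz hm
  rwa [← (toWeakSpace ℝ X).injective hweq]

lemma norm_bound_of_weak_tendsto {x : ℕ → X} {xbar : X}
    (hx : Tendsto (fun k => toWeakSpace ℝ X (x k)) atTop (𝓝 (toWeakSpace ℝ X xbar))) :
    ∃ M, ∀ k, ‖x k‖ ≤ M := by
  have hptwise : ∀ φ : StrongDual ℝ X, ∃ C, ∀ k,
      ‖(NormedSpace.inclusionInDoubleDual ℝ X (x k)) φ‖ ≤ C := by
    intro φ
    have hcont : Continuous fun w : WeakSpace ℝ X => (topDualPairing ℝ X).flip w φ :=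
      WeakBilin.eval_continuous _ φ
    have ht : Tendsto (fun k => φ (x k)) atTop (𝓝 (φ xbar)) :=
      (hcont.tendsto _).comp hx
    obtain ⟨C, hC⟩ := ht.norm.bddAbove_range
    exact ⟨C, fun k => hC (Set.mem_range_self k)⟩
  obtain ⟨C', hC'⟩ := banach_steinhaus hptwise
  exact ⟨C', fun k => (inclusion_norm (x k)) ▸ hC' k⟩

lemma le_add_all_eps {a b : ℝ} (h : ∀ ε > 0, a ≤ b + ε) : a ≤ b := by
  by_contra hc
  push_neg at hc
  have := h ((a - b) / 2) (by linarith)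
  linarith

lemma liminf_add_ge {u v : ℕ → ℝ} (hu0 : ∀ k, 0 ≤ u k) (hv0 : ∀ k, 0 ≤ v k)
    {Bu Bv : ℝ} (hBu : ∀ k, u k ≤ Bu) (hBv : ∀ k, v k ≤ Bv) :
    liminf u atTop + liminf v atTop ≤ liminf (fun k => u k + v k) atTop := by
  apply le_add_all_eps
  intro ε hε
  have hub : IsBoundedUnder (· ≥ ·) atTop u := isBoundedUnder_of ⟨0, fun k => hu0 k⟩
  have hvb : IsBoundedUnder (· ≥ ·) atTop v := isBoundedUnder_of ⟨0, fun k => hv0 k⟩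
  have h1 : ∀ᶠ k in atTop, liminf u atTop - ε / 2 < u k :=
    eventually_lt_of_lt_liminf (by linarith) hub
  have h2 : ∀ᶠ k in atTop, liminf v atTop - ε / 2 < v k :=
    eventually_lt_of_lt_liminf (by linarith) hvb
  have h3 : ∀ᶠ k in atTop, liminf u atTop + liminf v atTop - ε ≤ u k + v k :=
    (h1.and h2).mono fun k ⟨ha, hb⟩ => by linarith
  have h4 : IsCoboundedUnder (· ≥ ·) atTop (fun k => u k + v k) :=
    isCoboundedUnder_ge_of_le atTop (x := Bu + Bv) fun k => add_le_add (hBu k) (hBv k)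
  have := le_liminf_of_le h4 h3
  linarith

lemma liminf_finset_sum {ι : Type*} (s : Finset ι) (f : ι → ℕ → ℝ)
    (h0 : ∀ i ∈ s, ∀ k, 0 ≤ f i k) (hB : ∀ i ∈ s, ∃ B, ∀ k, f i k ≤ B) :
    (∃ B, 0 ≤ B ∧ ∀ k, ∑ i ∈ s, f i k ≤ B) ∧
      ∑ i ∈ s, liminf (fun k => f i k) atTop ≤ liminf (fun k => ∑ i ∈ s, f i k) atTop := by
  classical
  induction s using Finset.induction_on with
  | empty =>
    refine ⟨⟨0, le_rfl, by simp⟩, ?_⟩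
    simp [liminf_const]
  | @insert a s ha ih =>
    obtain ⟨⟨Bs, hBs0, hBs⟩, hsum⟩ := ih (fun i hi k => h0 i (Finset.mem_insert_of_mem hi) k)
      (fun i hi => hB i (Finset.mem_insert_of_mem hi))
    obtain ⟨Ba, hBa⟩ := hB a (Finset.mem_insert_self a s)
    have hBa' : ∀ k, f a k ≤ max Ba 0 := fun k => (hBa k).trans (le_max_left _ _)
    have h0a : ∀ k, 0 ≤ f a k := fun k => h0 a (Finset.mem_insert_self a s) k
    have h0s : ∀ k, 0 ≤ ∑ i ∈ s, f i k := fun k =>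
      Finset.sum_nonneg fun i hi => h0 i (Finset.mem_insert_of_mem hi) k
    constructor
    · refine ⟨max Ba 0 + Bs, add_nonneg (le_max_right _ _) hBs0, fun k => ?_⟩
      rw [Finset.sum_insert ha]
      exact add_le_add (hBa' k) (hBs k)
    · simp only [Finset.sum_insert ha]
      calc liminf (fun k => f a k) atTop + ∑ i ∈ s, liminf (fun k => f i k) atTop
          ≤ liminf (fun k => f a k) atTop + liminf (fun k => ∑ i ∈ s, f i k) atTop :=
            add_le_add le_rfl hsum
        _ ≤ liminf (fun k => f a k + ∑ i ∈ s, f i k) atTop :=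
            liminf_add_ge h0a h0s hBa' hBs

lemma minTime_le {F Θ : Set X} {q : X} (hq : q ∈ Θ) (x : X) :
    minTime F Θ x ≤ rhoF F (q - x) :=
  csInf_le ⟨0, by rintro y ⟨p, hp, rfl⟩; exact rhoF_nonneg F _⟩ (Set.mem_image_of_mem _ hq)

lemma minTime_nonneg (F Θ : Set X) (x : X) : 0 ≤ minTime F Θ x :=
  Real.sInf_nonneg (by rintro y ⟨p, hp, rfl⟩; exact rhoF_nonneg F _)

lemma maxTime_nonneg {F Q : Set X} (hQ : Q.Nonempty) (x : X) : 0 ≤ maxTime F Q x := by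
  obtain ⟨q, hq⟩ := hQ
  exact Real.sSup_nonneg' ⟨rhoF F (q - x), Set.mem_image_of_mem _ hq, rhoF_nonneg F _⟩

section FStuff

variable {F : Set X} (hFc : IsClosed F) (hFb : IsBounded F) (hFconv : Convex ℝ F)
  (hF0 : (0 : X) ∈ interior F)

include hF0 in
lemma exists_gauge_le : ∃ r > 0, ∀ y : X, gauge F y ≤ ‖y‖ / r := by
  obtain ⟨r, hr0, hball⟩ := Metric.mem_nhds_iff.mp (mem_interior_iff_mem_nhds.mp hF0)
  refine ⟨r, hr0, fun y => ?_⟩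
  calc gauge F y ≤ gauge (Metric.ball (0 : X) r) y :=
        gauge_mono (absorbent_nhds_zero (Metric.ball_mem_nhds _ hr0)) hball y
    _ = ‖y‖ / r := gauge_ball hr0.le y

include hFc hFb hFconv hF0 in
lemma maxTime_wlsc {Q : Set X} (hQne : Q.Nonempty) (hQb : IsBounded Q)
    {x : ℕ → X} {xbar : X} {M : ℝ} (hM : ∀ k, ‖x k‖ ≤ M)
    (hx : Tendsto (fun k => toWeakSpace ℝ X (x k)) atTop (𝓝 (toWeakSpace ℝ X xbar))) :
    maxTime F Q xbar ≤ liminf (fun k => maxTime F Q (x k)) atTop := by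
  classical
  have h0F : (0 : X) ∈ F := interior_subset hF0
  have hFne : F.Nonempty := ⟨0, h0F⟩
  have habs : Absorbent ℝ F := absorbent_nhds_zero (mem_interior_iff_mem_nhds.mp hF0)
  obtain ⟨r, hr0, hgauge⟩ := exists_gauge_le hF0
  obtain ⟨RQ, hRQ⟩ := hQb.subset_closedBall 0
  set B := (RQ + M) / r with hB
  have hrho : ∀ q ∈ Q, ∀ k, rhoF F (q - x k) ≤ B := by
    intro q hq k
    rw [rhoF_eq_gauge hFne]
    refine (hgauge _).trans ?_
    rw [hB]
    gcongr
    calc ‖q - x k‖ ≤ ‖q‖ + ‖x k‖ := norm_sub_le _ _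
      _ ≤ RQ + M := add_le_add (mem_closedBall_zero_iff.mp (hRQ hq)) (hM k)
  have hCle : ∀ k, maxTime F Q (x k) ≤ B := by
    intro k
    refine csSup_le (hQne.image _) ?_
    rintro y ⟨q, hq, rfl⟩
    exact hrho q hq k
  set b := liminf (fun k => maxTime F Q (x k)) atTop with hb
  refine csSup_le (hQne.image _) ?_
  rintro y ⟨q, hq, rfl⟩
  simp only [rhoF_eq_gauge hFne]
  apply le_add_all_eps
  intro ε hε
  have hcobdd : IsCoboundedUnder (· ≥ ·) atTop (fun k => maxTime F Q (x k)) :=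
    isCoboundedUnder_ge_of_le atTop (x := B) hCle
  have hfreq : ∃ᶠ k in atTop, maxTime F Q (x k) < b + ε :=
    frequently_lt_of_liminf_lt hcobdd (lt_add_of_pos_right b hε)
  have hbdd : ∀ k, BddAbove ((fun p => rhoF F (p - x k)) '' Q) := fun k =>
    ⟨B, by rintro y ⟨p, hp, rfl⟩; exact hrho p hp k⟩
  have hfreq2 : ∃ᶠ k in atTop, q - x k ∈ (b + ε) • F := by
    refine hfreq.mono fun k hk => ?_
    have h1 : rhoF F (q - x k) ≤ maxTime F Q (x k) :=
      le_csSup (hbdd k) (Set.mem_image_of_mem _ hq)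
    rw [rhoF_eq_gauge hFne] at h1
    exact mem_smul_of_gauge_lt habs hFconv h0F (h1.trans_lt hk)
  have hpos : 0 < b + ε := by
    obtain ⟨k, hk⟩ := hfreq.exists
    exact (maxTime_nonneg hQne (x k)).trans_lt hk
  set L : Filter ℕ := atTop ⊓ 𝓟 {k | q - x k ∈ (b + ε) • F} with hL
  haveI : L.NeBot := frequently_iff_neBot.mp hfreq2
  have hz : Tendsto (fun k => toWeakSpace ℝ X (q - x k)) L
      (𝓝 (toWeakSpace ℝ X (q - xbar))) := by
    have h1 : Tendsto (fun k => toWeakSpace ℝ X q - toWeakSpace ℝ X (x k)) atTop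
        (𝓝 (toWeakSpace ℝ X q - toWeakSpace ℝ X xbar)) := Filter.Tendsto.const_sub _ hx
    simp only [← map_sub] at h1
    exact h1.mono_left inf_le_left
  have hmem : ∀ᶠ k in L, q - x k ∈ (b + ε) • F :=
    eventually_inf_principal.mpr (Filter.Eventually.of_forall fun k hk => hk)
  have := mem_smul_of_weak_tendsto hFc hFconv hpos hz hmem
  exact gauge_le_of_mem hpos.le this

include hFc hFb hFconv hF0 in
lemma minTime_wlsc {Θ : Set X} (hΘne : Θ.Nonempty) (hΘw : WeaklyClosed X Θ)
    (hrefl : IsReflexiveSpace X)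
    {x : ℕ → X} {xbar : X} {M : ℝ} (hM : ∀ k, ‖x k‖ ≤ M)
    (hx : Tendsto (fun k => toWeakSpace ℝ X (x k)) atTop (𝓝 (toWeakSpace ℝ X xbar))) :
    minTime F Θ xbar ≤ liminf (fun k => minTime F Θ (x k)) atTop := by
  classical
  have h0F : (0 : X) ∈ F := interior_subset hF0
  have hFne : F.Nonempty := ⟨0, h0F⟩
  have habs : Absorbent ℝ F := absorbent_nhds_zero (mem_interior_iff_mem_nhds.mp hF0)
  obtain ⟨r, hr0, hgauge⟩ := exists_gauge_le hF0
  obtain ⟨q0, hq0⟩ := id hΘne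
  have hTle : ∀ k, minTime F Θ (x k) ≤ (‖q0‖ + M) / r := by
    intro k
    refine (minTime_le hq0 (x k)).trans ?_
    rw [rhoF_eq_gauge hFne]
    refine (hgauge _).trans ?_
    gcongr
    calc ‖q0 - x k‖ ≤ ‖q0‖ + ‖x k‖ := norm_sub_le _ _
      _ ≤ ‖q0‖ + M := add_le_add le_rfl (hM k)
  set b := liminf (fun k => minTime F Θ (x k)) atTop with hb
  apply le_add_all_eps
  intro ε hε
  set c := b + ε with hc
  have hcobdd : IsCoboundedUnder (· ≥ ·) atTop (fun k => minTime F Θ (x k)) :=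
    isCoboundedUnder_ge_of_le atTop (x := (‖q0‖ + M) / r) hTle
  have hfreq : ∃ᶠ k in atTop, minTime F Θ (x k) < c :=
    frequently_lt_of_liminf_lt hcobdd (lt_add_of_pos_right b hε)
  have hc0 : 0 < c := by
    obtain ⟨k, hk⟩ := hfreq.exists
    exact (minTime_nonneg F Θ (x k)).trans_lt hk
  set P : ℕ → Prop := fun k => ∃ q ∈ Θ, q - x k ∈ c • F with hP
  have hfreq2 : ∃ᶠ k in atTop, P k := by
    refine hfreq.mono fun k hk => ?_
    obtain ⟨y, ⟨q, hq, rfl⟩, hlt⟩ := exists_lt_of_csInf_lt (hΘne.image _) hk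
    simp only [rhoF_eq_gauge hFne] at hlt
    exact ⟨q, hq, mem_smul_of_gauge_lt habs hFconv h0F hlt⟩
  set q : ℕ → X := fun k => if h : P k then h.choose else q0 with hqdef
  have hqΘ : ∀ k, P k → q k ∈ Θ := by
    intro k hk
    simp only [hqdef, dif_pos hk]
    exact hk.choose_spec.1
  have hqF : ∀ k, P k → q k - x k ∈ c • F := by
    intro k hk
    simp only [hqdef, dif_pos hk]
    exact hk.choose_spec.2
  set L : Filter ℕ := atTop ⊓ 𝓟 {k | P k} with hLdef
  haveI : L.NeBot := frequently_iff_neBot.mp hfreq2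
  have hev : ∀ᶠ k in L, P k :=
    eventually_inf_principal.mpr (Filter.Eventually.of_forall fun k hk => hk)
  set g : ℕ → WeakSpace ℝ X := fun k => toWeakSpace ℝ X (q k - x k) with hgdef
  have hKcomp : IsCompact (toWeakSpace ℝ X '' (c • F)) :=
    isCompact_weak_smul hrefl hFc hFb hFconv c
  have hmap : Filter.map g L ≤ 𝓟 (toWeakSpace ℝ X '' (c • F)) := by
    refine le_principal_iff.mpr ?_
    have : ∀ᶠ k in L, g k ∈ toWeakSpace ℝ X '' (c • F) :=
      hev.mono fun k hk => Set.mem_image_of_mem _ (hqF k hk)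
    exact mem_map.mpr this
  obtain ⟨y, hy, hcl⟩ := hKcomp.exists_mapClusterPt (f := L) hmap
  set L' : Filter ℕ := L ⊓ Filter.comap g (𝓝 y) with hL'def
  haveI : L'.NeBot := by
    have hmapeq : Filter.map g L' = Filter.map g L ⊓ 𝓝 y := Filter.push_pull g L (𝓝 y)
    have hne : (𝓝 y ⊓ Filter.map g L).NeBot := hcl
    have : (Filter.map g L').NeBot := by
      rw [hmapeq, inf_comm]
      exact hne
    exact (Filter.map_neBot_iff g).mp this
  have hgy : Tendsto g L' (𝓝 y) := tendsto_comap.mono_left inf_le_right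
  have hxw' : Tendsto (fun k => toWeakSpace ℝ X (x k)) L' (𝓝 (toWeakSpace ℝ X xbar)) :=
    hx.mono_left ((inf_le_left).trans inf_le_left)
  have hq_tendsto : Tendsto (fun k => toWeakSpace ℝ X (q k)) L'
      (𝓝 (toWeakSpace ℝ X xbar + y)) := by
    have heq : (fun k => toWeakSpace ℝ X (q k))
        = fun k => toWeakSpace ℝ X (x k) + g k := by
      funext k
      rw [hgdef, ← map_add]
      congr 1
      abel
    rw [heq]
    exact hxw'.add hgy
  have hmemΘ : ∀ᶠ k in L', toWeakSpace ℝ X (q k) ∈ toWeakSpace ℝ X '' Θ :=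
    (hev.filter_mono inf_le_left).mono fun k hk => Set.mem_image_of_mem _ (hqΘ k hk)
  obtain ⟨θ, hθ, hθeq⟩ := hΘw.mem_of_tendsto hq_tendsto hmemΘ
  obtain ⟨f0, hf0, rfl⟩ := hy
  have hθval : θ = xbar + f0 := by
    apply (toWeakSpace ℝ X).injective
    rw [hθeq, map_add]
  have hmem : θ - xbar ∈ c • F := by
    rw [hθval, add_sub_cancel_left]
    exact hf0
  calc minTime F Θ xbar ≤ rhoF F (θ - xbar) := minTime_le hθ xbar
    _ = gauge F (θ - xbar) := rhoF_eq_gauge hFne _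
    _ ≤ c := gauge_le_of_mem hc0.le hmem

end FStuff

section FStuff2

variable {F : Set X} (hF0 : (0 : X) ∈ interior F)

include hF0 in
lemma maxTime_bound {Q : Set X} (hQne : Q.Nonempty) (hQb : IsBounded Q)
    {x : ℕ → X} {M : ℝ} (hM : ∀ k, ‖x k‖ ≤ M) : ∃ B, ∀ k, maxTime F Q (x k) ≤ B := by
  have hFne : F.Nonempty := ⟨0, interior_subset hF0⟩
  obtain ⟨r, hr0, hgauge⟩ := exists_gauge_le hF0
  obtain ⟨RQ, hRQ⟩ := hQb.subset_closedBall 0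
  refine ⟨(RQ + M) / r, fun k => csSup_le (hQne.image _) ?_⟩
  rintro y ⟨p, hp, rfl⟩
  simp only [rhoF_eq_gauge hFne]
  refine (hgauge _).trans ?_
  gcongr
  calc ‖p - x k‖ ≤ ‖p‖ + ‖x k‖ := norm_sub_le _ _
    _ ≤ RQ + M := add_le_add (mem_closedBall_zero_iff.mp (hRQ hp)) (hM k)

include hF0 in
lemma minTime_bound {Θ : Set X} {q0 : X} (hq0 : q0 ∈ Θ)
    {x : ℕ → X} {M : ℝ} (hM : ∀ k, ‖x k‖ ≤ M) : ∃ B, ∀ k, minTime F Θ (x k) ≤ B := by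
  have hFne : F.Nonempty := ⟨0, interior_subset hF0⟩
  obtain ⟨r, hr0, hgauge⟩ := exists_gauge_le hF0
  refine ⟨(‖q0‖ + M) / r, fun k => (minTime_le hq0 (x k)).trans ?_⟩
  rw [rhoF_eq_gauge hFne]
  refine (hgauge _).trans ?_
  gcongr
  calc ‖q0 - x k‖ ≤ ‖q0‖ + ‖x k‖ := norm_sub_le _ _
    _ ≤ ‖q0‖ + M := add_le_add le_rfl (hM k)

end FStuff2

/-- Lemma 2.2. -/
theorem stmt1 [CompleteSpace X]
    {ι κ : Type*} (F : Set X) (I : Finset ι) (J : Finset κ)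
    (Ω : ι → Set X) (Θ : κ → Set X) (S : Set X)
    (hFc : IsClosed F) (hFb : IsBounded F) (hFconv : Convex ℝ F)
    (hF0 : (0 : X) ∈ interior F)
    (hΩne : ∀ i ∈ I, (Ω i).Nonempty) (hΩc : ∀ i ∈ I, IsClosed (Ω i))
    (hΩb : ∀ i ∈ I, IsBounded (Ω i))
    (hΘne : ∀ j ∈ J, (Θ j).Nonempty) (hΘc : ∀ j ∈ J, IsClosed (Θ j))
    (hSne : S.Nonempty) (hSc : IsClosed S)
    (hIJ : I.Nonempty ∨ J.Nonempty)
    (hrefl : IsReflexiveSpace X) (hΘw : ∀ j ∈ J, WeaklyClosed X (Θ j)) :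
    ∀ (x : ℕ → X) (xbar : X),
      Tendsto (fun k => toWeakSpace ℝ X (x k)) atTop (nhds (toWeakSpace ℝ X xbar)) →
      GFun F I J Ω Θ xbar ≤ Filter.liminf (fun k => GFun F I J Ω Θ (x k)) atTop ∧
      HFun F I J Ω Θ xbar ≤ Filter.liminf (fun k => HFun F I J Ω Θ (x k)) atTop := by
  intro x xbar hx
  classical
  obtain ⟨M, hM⟩ := norm_bound_of_weak_tendsto hx
  have hC : ∀ i ∈ I, maxTime F (Ω i) xbar ≤ liminf (fun k => maxTime F (Ω i) (x k)) atTop :=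
    fun i hi => maxTime_wlsc hFc hFb hFconv hF0 (hΩne i hi) (hΩb i hi) hM hx
  have hT : ∀ j ∈ J, minTime F (Θ j) xbar ≤ liminf (fun k => minTime F (Θ j) (x k)) atTop :=
    fun j hj => minTime_wlsc hFc hFb hFconv hF0 (hΘne j hj) (hΘw j hj) hrefl hM hx
  have hCpos : ∀ i ∈ I, ∀ k, 0 ≤ maxTime F (Ω i) (x k) :=
    fun i hi k => maxTime_nonneg (hΩne i hi) _
  have hTpos : ∀ j ∈ J, ∀ k, 0 ≤ minTime F (Θ j) (x k) :=
    fun j hj k => minTime_nonneg _ _ _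
  have hCB : ∀ i ∈ I, ∃ B, ∀ k, maxTime F (Ω i) (x k) ≤ B :=
    fun i hi => maxTime_bound hF0 (hΩne i hi) (hΩb i hi) hM
  have hTB : ∀ j ∈ J, ∃ B, ∀ k, minTime F (Θ j) (x k) ≤ B :=
    fun j hj => minTime_bound hF0 (hΘne j hj).choose_spec hM
  obtain ⟨⟨BI, hBI0, hBI⟩, hIsum⟩ :=
    liminf_finset_sum I (fun i k => maxTime F (Ω i) (x k)) hCpos hCB
  obtain ⟨⟨BJ, hBJ0, hBJ⟩, hJsum⟩ :=
    liminf_finset_sum J (fun j k => minTime F (Θ j) (x k)) hTpos hTB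
  have hH : HFun F I J Ω Θ xbar ≤ liminf (fun k => HFun F I J Ω Θ (x k)) atTop := by
    unfold HFun
    calc ∑ i ∈ I, maxTime F (Ω i) xbar + ∑ j ∈ J, minTime F (Θ j) xbar
        ≤ (∑ i ∈ I, liminf (fun k => maxTime F (Ω i) (x k)) atTop)
          + ∑ j ∈ J, liminf (fun k => minTime F (Θ j) (x k)) atTop :=
          add_le_add (Finset.sum_le_sum hC) (Finset.sum_le_sum hT)
      _ ≤ liminf (fun k => ∑ i ∈ I, maxTime F (Ω i) (x k)) atTop
          + liminf (fun k => ∑ j ∈ J, minTime F (Θ j) (x k)) atTop := add_le_add hIsum hJsum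
      _ ≤ liminf (fun k => ∑ i ∈ I, maxTime F (Ω i) (x k)
            + ∑ j ∈ J, minTime F (Θ j) (x k)) atTop :=
          liminf_add_ge (fun k => Finset.sum_nonneg fun i hi => hCpos i hi k)
            (fun k => Finset.sum_nonneg fun j hj => hTpos j hj k) hBI hBJ
  have hGle : ∀ k, GFun F I J Ω Θ (x k) ≤ BI + BJ := by
    intro k
    refine Real.sSup_le ?_ (add_nonneg hBI0 hBJ0)
    rintro y (⟨i, hi, rfl⟩ | ⟨j, hj, rfl⟩)
    · calc maxTime F (Ω i) (x k) ≤ ∑ i' ∈ I, maxTime F (Ω i') (x k) :=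
          Finset.single_le_sum (fun i' hi' => hCpos i' hi' k) (Finset.mem_coe.mp hi)
        _ ≤ BI := hBI k
        _ ≤ BI + BJ := le_add_of_nonneg_right hBJ0
    · calc minTime F (Θ j) (x k) ≤ ∑ j' ∈ J, minTime F (Θ j') (x k) :=
          Finset.single_le_sum (fun j' hj' => hTpos j' hj' k) (Finset.mem_coe.mp hj)
        _ ≤ BJ := hBJ k
        _ ≤ BI + BJ := le_add_of_nonneg_left hBI0
  have hGcobdd : IsCoboundedUnder (· ≥ ·) atTop (fun k => GFun F I J Ω Θ (x k)) :=
    isCoboundedUnder_ge_of_le atTop (x := BI + BJ) hGle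
  have hfin : ∀ z : X, BddAbove ((fun i => maxTime F (Ω i) z) '' ↑I
      ∪ (fun j => minTime F (Θ j) z) '' ↑J) := fun z =>
    ((I.finite_toSet.image _).union (J.finite_toSet.image _)).bddAbove
  have hG : GFun F I J Ω Θ xbar ≤ liminf (fun k => GFun F I J Ω Θ (x k)) atTop := by
    unfold GFun
    have hne : ((fun i => maxTime F (Ω i) xbar) '' ↑I
        ∪ (fun j => minTime F (Θ j) xbar) '' ↑J).Nonempty := by
      rcases hIJ with ⟨i, hi⟩ | ⟨j, hj⟩
      · exact ⟨_, Or.inl (Set.mem_image_of_mem _ (Finset.mem_coe.mpr hi))⟩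
      · exact ⟨_, Or.inr (Set.mem_image_of_mem _ (Finset.mem_coe.mpr hj))⟩
    refine csSup_le hne ?_
    rintro y (⟨i, hi, rfl⟩ | ⟨j, hj, rfl⟩)
    · have hi' : i ∈ I := Finset.mem_coe.mp hi
      calc (fun i => maxTime F (Ω i) xbar) i
          ≤ liminf (fun k => maxTime F (Ω i) (x k)) atTop := hC i hi'
        _ ≤ liminf (fun k => GFun F I J Ω Θ (x k)) atTop := by
            refine liminf_le_liminf (Filter.Eventually.of_forall fun k => ?_)
              (isBoundedUnder_of ⟨0, fun k => hCpos i hi' k⟩) hGcobdd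
            exact le_csSup (hfin (x k)) (Or.inl (Set.mem_image_of_mem _ hi))
    · have hj' : j ∈ J := Finset.mem_coe.mp hj
      calc (fun j => minTime F (Θ j) xbar) j
          ≤ liminf (fun k => minTime F (Θ j) (x k)) atTop := hT j hj'
        _ ≤ liminf (fun k => GFun F I J Ω Θ (x k)) atTop := by
            refine liminf_le_liminf (Filter.Eventually.of_forall fun k => ?_)
              (isBoundedUnder_of ⟨0, fun k => hTpos j hj' k⟩) hGcobdd
            exact le_csSup (hfin (x k)) (Or.inr (Set.mem_image_of_mem _ hj))
  exact ⟨hG, hH⟩
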